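/- arXiv:2512.23288 — 5 statements merged into one kernel-verified Lean document; each statement's English description precedes it below -/
import Mathlib

section
/- Let ν be a σ-finite Borel measure on 𝒪 with ∫_𝒪 |u|³ ν(du) < ∞, and let β ∈ (0,2). Assume that κ := limsup_{λ→∞} λ^{-β/3} ∫_𝒪 (1 - e^{-λ|u|³}) ν(du) satisfies 0 < κ < ∞. Then for every p ≥ 2 there exists a constant C > 0 such that for every ε ∈ (0,1), ∫_{{u ∈ 𝒪 : |u| ≤ ε}} |u|^p ν(du) ≤ C ε^{p-β}. -/
open MeasureTheory Set Filter

/-- Let `ν` be a σ-finite Borel measure on the punctured closed unit ball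
`𝒪 = {u : 0 < ‖u‖ ≤ 1}` of `ℝ^l` with finite third moment, and `β ∈ (0,2)`. If
`κ := limsup_{λ→∞} λ^{-β/3} ∫_𝒪 (1 - e^{-λ‖u‖³}) ν(du)` satisfies `0 < κ < ∞`, then for
every `p ≥ 2` there is `C > 0` with `∫_{‖u‖ ≤ ε} ‖u‖^p ν(du) ≤ C ε^{p-β}` for all `ε ∈ (0,1)`. -/
theorem stmt_0 (l : ℕ) (hl : 1 ≤ l)
    (ν : Measure (EuclideanSpace ℝ (Fin l))) [SigmaFinite ν]
    (hsupp : ν {u : EuclideanSpace ℝ (Fin l) | ¬ (0 < ‖u‖ ∧ ‖u‖ ≤ 1)} = 0)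
    (hmom : (∫⁻ u in {u : EuclideanSpace ℝ (Fin l) | 0 < ‖u‖ ∧ ‖u‖ ≤ 1},
        ENNReal.ofReal (‖u‖ ^ 3) ∂ν) < ⊤)
    (β : ℝ) (hβ : β ∈ Set.Ioo (0 : ℝ) 2) (κ : ENNReal)
    (hκdef : κ = Filter.limsup (fun lam : ℝ =>
        ENNReal.ofReal (lam ^ (-(β / 3))) *
          ∫⁻ u in {u : EuclideanSpace ℝ (Fin l) | 0 < ‖u‖ ∧ ‖u‖ ≤ 1},
            ENNReal.ofReal (1 - Real.exp (-(lam * ‖u‖ ^ 3))) ∂ν) Filter.atTop)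
    (hκpos : 0 < κ) (hκfin : κ < ⊤) :
    ∀ p : ℝ, 2 ≤ p → ∃ C : ℝ, 0 < C ∧ ∀ ε ∈ Set.Ioo (0 : ℝ) 1,
      (∫⁻ u in {u : EuclideanSpace ℝ (Fin l) | (0 < ‖u‖ ∧ ‖u‖ ≤ 1) ∧ ‖u‖ ≤ ε},
        ENNReal.ofReal (‖u‖ ^ p) ∂ν) ≤ ENNReal.ofReal (C * ε ^ (p - β)) := by
  obtain ⟨hβ0, hβ2⟩ := hβ
  intro p hp
  have hppos : (0:ℝ) < p := by linarith
  have hpβ : (0:ℝ) < p - β := by linarith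
  -- measurability of the annulus-type sets
  have mS : ∀ r : ℝ, MeasurableSet
      {u : EuclideanSpace ℝ (Fin l) | (0 < ‖u‖ ∧ ‖u‖ ≤ 1) ∧ r ≤ ‖u‖} := fun r =>
    (((measurableSet_lt measurable_const measurable_norm).inter
      (measurableSet_le measurable_norm measurable_const)).inter
      (measurableSet_le measurable_const measurable_norm))
  -- Step 1: eventual bound from the limsup
  have hev : ∀ᶠ lam : ℝ in atTop, ENNReal.ofReal (lam ^ (-(β / 3))) *
      (∫⁻ u in {u : EuclideanSpace ℝ (Fin l) | 0 < ‖u‖ ∧ ‖u‖ ≤ 1},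
        ENNReal.ofReal (1 - Real.exp (-(lam * ‖u‖ ^ 3))) ∂ν) < κ + 1 := by
    refine eventually_lt_of_limsup_lt ?_ (isBoundedUnder_of ⟨⊤, fun _ => le_top⟩)
    rw [← hκdef]
    exact ENNReal.lt_add_right hκfin.ne one_ne_zero
  obtain ⟨a0, ha0⟩ := Filter.eventually_atTop.mp hev
  set lam1 : ℝ := max a0 1 with hlam1
  have hlam11 : (1:ℝ) ≤ lam1 := le_max_right _ _
  have hlam10 : (0:ℝ) < lam1 := lt_of_lt_of_le one_pos hlam11
  set r₁ : ℝ := lam1 ^ (-(1/3) : ℝ) with hr₁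
  have hr₁0 : 0 < r₁ := Real.rpow_pos_of_pos hlam10 _
  have hr₁1 : r₁ ≤ 1 := Real.rpow_le_one_of_one_le_of_nonpos hlam11 (by norm_num)
  have hr₁3 : r₁ ^ (3:ℕ) = lam1⁻¹ := by
    rw [hr₁, ← Real.rpow_natCast (lam1 ^ (-(1/3):ℝ)) 3, ← Real.rpow_mul hlam10.le]
    norm_num [Real.rpow_neg_one]
  set c : ℝ := 1 - Real.exp (-1) with hc
  have hc0 : 0 < c := by
    have : Real.exp (-1) < 1 := Real.exp_lt_one_iff.mpr (by norm_num)
    simp only [hc]; linarith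
  have hcR0 : ENNReal.ofReal c ≠ 0 := by
    simp [ENNReal.ofReal_eq_zero, not_le, hc0]
  -- Step 2: tail estimate for small r
  have key1 : ∀ r : ℝ, 0 < r → r ≤ r₁ →
      ν {u : EuclideanSpace ℝ (Fin l) | (0 < ‖u‖ ∧ ‖u‖ ≤ 1) ∧ r ≤ ‖u‖} *
        ENNReal.ofReal (r ^ β) ≤ (κ + 1) / ENNReal.ofReal c := by
    intro r hr hrr₁
    rw [ENNReal.le_div_iff_mul_le (Or.inl hcR0) (Or.inl ENNReal.ofReal_ne_top)]
    set lam : ℝ := (r ^ 3)⁻¹ with hlam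
    have hr3 : (0:ℝ) < r ^ 3 := by positivity
    have hlam_ge : a0 ≤ lam := by
      have h1 : r ^ 3 ≤ lam1⁻¹ := hr₁3 ▸ pow_le_pow_left₀ hr.le hrr₁ 3
      have h2 : lam1 ≤ (r ^ 3)⁻¹ := by
        rw [← inv_inv lam1]
        exact inv_anti₀ hr3 h1
      exact le_trans (le_max_left _ _) h2
    have hlim := (ha0 lam hlam_ge).le
    have h3 : lam ^ (-(β/3)) = r ^ β := by
      have e1 : ((r ^ 3 : ℝ))⁻¹ = r ^ (-(3:ℝ)) := by
        rw [← Real.rpow_natCast r 3, ← Real.rpow_neg hr.le]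
        norm_num
      rw [hlam, e1, ← Real.rpow_mul hr.le]
      congr 1; ring
    have h4 : ENNReal.ofReal c *
        ν {u : EuclideanSpace ℝ (Fin l) | (0 < ‖u‖ ∧ ‖u‖ ≤ 1) ∧ r ≤ ‖u‖} ≤
        ∫⁻ u in {u : EuclideanSpace ℝ (Fin l) | 0 < ‖u‖ ∧ ‖u‖ ≤ 1},
          ENNReal.ofReal (1 - Real.exp (-(lam * ‖u‖ ^ 3))) ∂ν := by
      calc ENNReal.ofReal c *
          ν {u : EuclideanSpace ℝ (Fin l) | (0 < ‖u‖ ∧ ‖u‖ ≤ 1) ∧ r ≤ ‖u‖}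
          = ∫⁻ _ in {u : EuclideanSpace ℝ (Fin l) | (0 < ‖u‖ ∧ ‖u‖ ≤ 1) ∧ r ≤ ‖u‖},
              ENNReal.ofReal c ∂ν := (setLIntegral_const _ _).symm
        _ ≤ ∫⁻ u in {u : EuclideanSpace ℝ (Fin l) | (0 < ‖u‖ ∧ ‖u‖ ≤ 1) ∧ r ≤ ‖u‖},
              ENNReal.ofReal (1 - Real.exp (-(lam * ‖u‖ ^ 3))) ∂ν := by
            apply lintegral_mono_ae
            filter_upwards [self_mem_ae_restrict (mS r)] with u hu
            apply ENNReal.ofReal_le_ofReal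
            have h1 : (1:ℝ) ≤ lam * ‖u‖ ^ 3 := by
              have h2 : r ^ 3 ≤ ‖u‖ ^ 3 := pow_le_pow_left₀ hr.le hu.2 3
              have := mul_le_mul_of_nonneg_left h2 (le_of_lt (inv_pos.mpr hr3))
              rwa [inv_mul_cancel₀ hr3.ne'] at this
            have h5 : Real.exp (-(lam * ‖u‖ ^ 3)) ≤ Real.exp (-1) :=
              Real.exp_le_exp.mpr (by linarith)
            simp only [hc]; linarith
        _ ≤ _ := lintegral_mono_set (fun u hu => hu.1)
    calc ν {u : EuclideanSpace ℝ (Fin l) | (0 < ‖u‖ ∧ ‖u‖ ≤ 1) ∧ r ≤ ‖u‖} *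
          ENNReal.ofReal (r ^ β) * ENNReal.ofReal c
        = ENNReal.ofReal (r ^ β) * (ENNReal.ofReal c *
            ν {u : EuclideanSpace ℝ (Fin l) | (0 < ‖u‖ ∧ ‖u‖ ≤ 1) ∧ r ≤ ‖u‖}) := by ring
      _ ≤ ENNReal.ofReal (r ^ β) *
            ∫⁻ u in {u : EuclideanSpace ℝ (Fin l) | 0 < ‖u‖ ∧ ‖u‖ ≤ 1},
              ENNReal.ofReal (1 - Real.exp (-(lam * ‖u‖ ^ 3))) ∂ν :=
          mul_le_mul_right h4 _
      _ = ENNReal.ofReal (lam ^ (-(β/3))) *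
            ∫⁻ u in {u : EuclideanSpace ℝ (Fin l) | 0 < ‖u‖ ∧ ‖u‖ ≤ 1},
              ENNReal.ofReal (1 - Real.exp (-(lam * ‖u‖ ^ 3))) ∂ν := by rw [h3]
      _ ≤ κ + 1 := hlim
  -- Step 3: the measure of {r₁ ≤ ‖u‖} is finite (third moment)
  have hSfin : ν {u : EuclideanSpace ℝ (Fin l) | (0 < ‖u‖ ∧ ‖u‖ ≤ 1) ∧ r₁ ≤ ‖u‖} < ⊤ := by
    have h4 : ENNReal.ofReal (r₁ ^ 3) *
        ν {u : EuclideanSpace ℝ (Fin l) | (0 < ‖u‖ ∧ ‖u‖ ≤ 1) ∧ r₁ ≤ ‖u‖} ≤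
        ∫⁻ u in {u : EuclideanSpace ℝ (Fin l) | 0 < ‖u‖ ∧ ‖u‖ ≤ 1},
          ENNReal.ofReal (‖u‖ ^ 3) ∂ν := by
      calc ENNReal.ofReal (r₁ ^ 3) *
          ν {u : EuclideanSpace ℝ (Fin l) | (0 < ‖u‖ ∧ ‖u‖ ≤ 1) ∧ r₁ ≤ ‖u‖}
          = ∫⁻ _ in {u : EuclideanSpace ℝ (Fin l) | (0 < ‖u‖ ∧ ‖u‖ ≤ 1) ∧ r₁ ≤ ‖u‖},
              ENNReal.ofReal (r₁ ^ 3) ∂ν := (setLIntegral_const _ _).symm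
        _ ≤ ∫⁻ u in {u : EuclideanSpace ℝ (Fin l) | (0 < ‖u‖ ∧ ‖u‖ ≤ 1) ∧ r₁ ≤ ‖u‖},
              ENNReal.ofReal (‖u‖ ^ 3) ∂ν := by
            apply lintegral_mono_ae
            filter_upwards [self_mem_ae_restrict (mS r₁)] with u hu
            exact ENNReal.ofReal_le_ofReal (pow_le_pow_left₀ hr₁0.le hu.2 3)
        _ ≤ _ := lintegral_mono_set (fun u hu => hu.1)
    have := lt_of_le_of_lt h4 hmom
    exact ENNReal.lt_top_of_mul_ne_top_right this.ne
      (by simp [ENNReal.ofReal_eq_zero, not_le]; positivity)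
  -- Step 4: uniform tail bound on (0, 1]
  set K : ENNReal := (κ + 1) / ENNReal.ofReal c +
    ν {u : EuclideanSpace ℝ (Fin l) | (0 < ‖u‖ ∧ ‖u‖ ≤ 1) ∧ r₁ ≤ ‖u‖} with hK
  have hKtop : K ≠ ⊤ := by
    rw [hK]
    exact ENNReal.add_ne_top.mpr
      ⟨(ENNReal.div_lt_top (ENNReal.add_ne_top.mpr ⟨hκfin.ne, ENNReal.one_ne_top⟩) hcR0).ne,
        hSfin.ne⟩
  have keyT : ∀ r : ℝ, 0 < r → r ≤ 1 →
      ν {u : EuclideanSpace ℝ (Fin l) | (0 < ‖u‖ ∧ ‖u‖ ≤ 1) ∧ r ≤ ‖u‖} *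
        ENNReal.ofReal (r ^ β) ≤ K := by
    intro r hr hr1
    rcases le_or_gt r r₁ with h | h
    · exact le_trans (key1 r hr h) le_self_add
    · calc ν {u : EuclideanSpace ℝ (Fin l) | (0 < ‖u‖ ∧ ‖u‖ ≤ 1) ∧ r ≤ ‖u‖} *
            ENNReal.ofReal (r ^ β)
          ≤ ν {u : EuclideanSpace ℝ (Fin l) | (0 < ‖u‖ ∧ ‖u‖ ≤ 1) ∧ r₁ ≤ ‖u‖} * 1 :=
            mul_le_mul' (measure_mono fun u hu => ⟨hu.1, le_trans h.le hu.2⟩)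
              (ENNReal.ofReal_le_one.mpr (Real.rpow_le_one hr.le hr1 hβ0.le))
        _ ≤ K := by rw [mul_one, hK]; exact le_add_self
  -- Step 5: layer cake
  refine ⟨p * (K.toReal + 1) / (p - β), by positivity, ?_⟩
  rintro ε ⟨hε0, hε1⟩
  set A : Set (EuclideanSpace ℝ (Fin l)) :=
    {u : EuclideanSpace ℝ (Fin l) | (0 < ‖u‖ ∧ ‖u‖ ≤ 1) ∧ ‖u‖ ≤ ε} with hA
  have layer := lintegral_rpow_eq_lintegral_meas_le_mul (ν.restrict A)
    (f := fun u => ‖u‖) (Filter.Eventually.of_forall fun u => norm_nonneg u)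
    measurable_norm.aemeasurable hppos
  have hq : (-1:ℝ) < p - 1 - β := by linarith
  have hbound : (∫⁻ t in Ioi (0:ℝ), (ν.restrict A) {a | t ≤ ‖a‖} * ENNReal.ofReal (t ^ (p-1)))
      ≤ K * ENNReal.ofReal (ε ^ (p-β) / (p-β)) := by
    have step1 : (∫⁻ t in Ioi (0:ℝ), (ν.restrict A) {a | t ≤ ‖a‖} * ENNReal.ofReal (t ^ (p-1)))
        ≤ ∫⁻ t in Ioi (0:ℝ),
            (Ioc (0:ℝ) ε).indicator (fun t => K * ENNReal.ofReal (t ^ (p-1-β))) t := by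
      apply lintegral_mono_ae
      filter_upwards [self_mem_ae_restrict measurableSet_Ioi] with t ht
      have ht0 : (0:ℝ) < t := ht
      rcases le_or_gt t ε with hte | hte
      · rw [Set.indicator_of_mem (Set.mem_Ioc.mpr ⟨ht0, hte⟩)]
        have hmeasr : (ν.restrict A) {a : EuclideanSpace ℝ (Fin l) | t ≤ ‖a‖} =
            ν ({a : EuclideanSpace ℝ (Fin l) | t ≤ ‖a‖} ∩ A) :=
          Measure.restrict_apply (measurableSet_le measurable_const measurable_norm)
        have h1 : (ν.restrict A) {a : EuclideanSpace ℝ (Fin l) | t ≤ ‖a‖} ≤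
            ν {u : EuclideanSpace ℝ (Fin l) | (0 < ‖u‖ ∧ ‖u‖ ≤ 1) ∧ t ≤ ‖u‖} := by
          rw [hmeasr]
          exact measure_mono fun u hu => ⟨hu.2.1, hu.1⟩
        have hsplit : ENNReal.ofReal (t ^ (p-1)) =
            ENNReal.ofReal (t ^ β) * ENNReal.ofReal (t ^ (p-1-β)) := by
          rw [← ENNReal.ofReal_mul (Real.rpow_nonneg ht0.le _), ← Real.rpow_add ht0]
          congr 1; ring
        calc (ν.restrict A) {a : EuclideanSpace ℝ (Fin l) | t ≤ ‖a‖} *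
              ENNReal.ofReal (t ^ (p-1))
            ≤ ν {u : EuclideanSpace ℝ (Fin l) | (0 < ‖u‖ ∧ ‖u‖ ≤ 1) ∧ t ≤ ‖u‖} *
              (ENNReal.ofReal (t ^ β) * ENNReal.ofReal (t ^ (p-1-β))) := by
              rw [← hsplit]; exact mul_le_mul_left h1 _
          _ = (ν {u : EuclideanSpace ℝ (Fin l) | (0 < ‖u‖ ∧ ‖u‖ ≤ 1) ∧ t ≤ ‖u‖} *
              ENNReal.ofReal (t ^ β)) * ENNReal.ofReal (t ^ (p-1-β)) := by ring
          _ ≤ K * ENNReal.ofReal (t ^ (p-1-β)) :=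
              mul_le_mul_left (keyT t ht0 (le_trans hte hε1.le)) _
      · rw [Set.indicator_of_notMem (fun hmem => absurd hmem.2 (not_le.mpr hte))]
        have hz : (ν.restrict A) {a : EuclideanSpace ℝ (Fin l) | t ≤ ‖a‖} = 0 := by
          rw [Measure.restrict_apply (measurableSet_le measurable_const measurable_norm)]
          have hempty : ({a : EuclideanSpace ℝ (Fin l) | t ≤ ‖a‖} ∩ A) = ∅ := by
            rw [Set.eq_empty_iff_forall_notMem]
            rintro u ⟨h1, -, h3⟩
            exact absurd (le_trans h1 h3) (not_le.mpr hte)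
          rw [hempty, measure_empty]
        rw [hz, zero_mul]
    have step2 : (∫⁻ t in Ioi (0:ℝ),
        (Ioc (0:ℝ) ε).indicator (fun t => K * ENNReal.ofReal (t ^ (p-1-β))) t)
        = K * ∫⁻ t in Ioc (0:ℝ) ε, ENNReal.ofReal (t ^ (p-1-β)) := by
      rw [lintegral_indicator measurableSet_Ioc, Measure.restrict_restrict measurableSet_Ioc,
        Set.inter_eq_left.mpr Ioc_subset_Ioi_self, lintegral_const_mul' _ _ hKtop]
    have hint : IntegrableOn (fun t : ℝ => t ^ (p-1-β)) (Ioc 0 ε) volume := by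
      have h := intervalIntegral.intervalIntegrable_rpow' (a := 0) (b := ε) hq
      rwa [intervalIntegrable_iff, uIoc_of_le hε0.le] at h
    have step3 : (∫⁻ t in Ioc (0:ℝ) ε, ENNReal.ofReal (t ^ (p-1-β)))
        = ENNReal.ofReal (ε ^ (p-β) / (p-β)) := by
      rw [← ofReal_integral_eq_lintegral_ofReal hint ?_]
      · congr 1
        rw [← intervalIntegral.integral_of_le hε0.le, integral_rpow (Or.inl hq),
          Real.zero_rpow (by linarith : p - 1 - β + 1 ≠ 0), sub_zero,
          show p - 1 - β + 1 = p - β by ring]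
      · filter_upwards [self_mem_ae_restrict measurableSet_Ioc] with t ht
        exact Real.rpow_nonneg ht.1.le _
    calc (∫⁻ t in Ioi (0:ℝ), (ν.restrict A) {a | t ≤ ‖a‖} * ENNReal.ofReal (t ^ (p-1)))
        ≤ _ := step1
      _ = K * ∫⁻ t in Ioc (0:ℝ) ε, ENNReal.ofReal (t ^ (p-1-β)) := step2
      _ = K * ENNReal.ofReal (ε ^ (p-β) / (p-β)) := by rw [step3]
  have hE : (0:ℝ) ≤ ε ^ (p - β) := Real.rpow_nonneg hε0.le _
  have hK0 : (0:ℝ) ≤ K.toReal := ENNReal.toReal_nonneg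
  calc (∫⁻ u in A, ENNReal.ofReal (‖u‖ ^ p) ∂ν)
      = ENNReal.ofReal p *
        ∫⁻ t in Ioi (0:ℝ), (ν.restrict A) {a | t ≤ ‖a‖} * ENNReal.ofReal (t ^ (p-1)) := layer
    _ ≤ ENNReal.ofReal p * (K * ENNReal.ofReal (ε ^ (p-β) / (p-β))) := mul_le_mul_right hbound _
    _ = ENNReal.ofReal p * (ENNReal.ofReal K.toReal * ENNReal.ofReal (ε ^ (p-β) / (p-β))) := by
        rw [ENNReal.ofReal_toReal hKtop]
    _ = ENNReal.ofReal (p * (K.toReal * (ε ^ (p-β) / (p-β)))) := by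
        rw [← ENNReal.ofReal_mul ENNReal.toReal_nonneg, ← ENNReal.ofReal_mul hppos.le]
    _ ≤ ENNReal.ofReal (p * (K.toReal + 1) / (p - β) * ε ^ (p - β)) := by
        apply ENNReal.ofReal_le_ofReal
        rw [show p * (K.toReal * (ε ^ (p-β) / (p-β))) = p * K.toReal * ε ^ (p-β) / (p-β) by ring,
          show p * (K.toReal + 1) / (p - β) * ε ^ (p - β)
            = p * (K.toReal + 1) * ε ^ (p-β) / (p-β) by ring]
        gcongr
        linarith
end

section
/- Let ν be a σ-finite Borel measure on 𝒪, β ∈ (0,2), and C₁ > 0, and assume ∫_𝒪 (1 - e^{-λ|u|³}) ν(du) ≤ C₁ λ^{β/3} for every λ > 0. Then for every positive integer n, ∫_{{u ∈ 𝒪 : 2^{-n-1} < |u| ≤ 2^{-n}}} |u|² ν(du) ≤ 2 e C₁ · 2^{-n(2-β)}. -/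
open MeasureTheory Set Filter

lemma key_ineq (t : ℝ) (h1 : 1/2 < t) (h2 : t ≤ 1) :
    t ^ 2 ≤ 2 * Real.exp 1 * (1 - Real.exp (-(t ^ 3))) := by
  have ht0 : 0 < t := by linarith
  have ht3 : t ^ 3 ≤ 1 := pow_le_one₀ ht0.le h2
  have hE1 : t ^ 3 + 1 ≤ Real.exp (t ^ 3) := Real.add_one_le_exp _
  have hEe : Real.exp (t ^ 3) ≤ Real.exp 1 := Real.exp_le_exp.mpr ht3
  have hEpos : 0 < Real.exp (t ^ 3) := Real.exp_pos _
  have hepos : 0 < Real.exp 1 := Real.exp_pos _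
  have hneg : Real.exp (-(t ^ 3)) = (Real.exp (t ^ 3))⁻¹ := Real.exp_neg _
  rw [hneg]
  have h3 : (0:ℝ) < t^3 := by positivity
  have hinv : 1 - (Real.exp (t ^ 3))⁻¹ ≥ t ^ 3 / Real.exp 1 := by
    rw [ge_iff_le, div_le_iff₀ hepos]
    have : (Real.exp (t ^ 3))⁻¹ * Real.exp (t^3) = 1 := inv_mul_cancel₀ hEpos.ne'
    nlinarith [mul_pos (inv_pos.mpr hEpos) (sub_pos.mpr (lt_of_lt_of_le (by linarith) hE1) : (0:ℝ) < Real.exp (t^3) - 1)]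
  have : 2 * Real.exp 1 * (t ^ 3 / Real.exp 1) ≤ 2 * Real.exp 1 * (1 - (Real.exp (t ^ 3))⁻¹) :=
    mul_le_mul_of_nonneg_left hinv (by positivity)
  have h2t : 2 * Real.exp 1 * (t ^ 3 / Real.exp 1) = 2 * t ^ 3 := by
    field_simp
  nlinarith

/-- If `ν` is a σ-finite measure on `𝒪`, `β ∈ (0,2)` and `C₁ > 0` with
`∫_𝒪 (1 - e^{-λ‖u‖³}) ν(du) ≤ C₁ λ^{β/3}` for every `λ > 0`, then for every positive
integer `n`, `∫_{2^{-n-1} < ‖u‖ ≤ 2^{-n}} ‖u‖² ν(du) ≤ 2 e C₁ · 2^{-n(2-β)}`. -/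
theorem stmt_2 (l : ℕ) (hl : 1 ≤ l)
    (ν : Measure (EuclideanSpace ℝ (Fin l))) [SigmaFinite ν]
    (hsupp : ν {u : EuclideanSpace ℝ (Fin l) | ¬ (0 < ‖u‖ ∧ ‖u‖ ≤ 1)} = 0)
    (β : ℝ) (hβ : β ∈ Set.Ioo (0 : ℝ) 2) (C₁ : ℝ) (hC₁ : 0 < C₁)
    (hbound : ∀ lam : ℝ, 0 < lam →
      (∫⁻ u in {u : EuclideanSpace ℝ (Fin l) | 0 < ‖u‖ ∧ ‖u‖ ≤ 1},
        ENNReal.ofReal (1 - Real.exp (-(lam * ‖u‖ ^ 3))) ∂ν)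
        ≤ ENNReal.ofReal (C₁ * lam ^ (β / 3))) :
    ∀ n : ℕ, 1 ≤ n →
      (∫⁻ u in {u : EuclideanSpace ℝ (Fin l) |
          (2 : ℝ) ^ (-(n : ℝ) - 1) < ‖u‖ ∧ ‖u‖ ≤ (2 : ℝ) ^ (-(n : ℝ))},
        ENNReal.ofReal (‖u‖ ^ 2) ∂ν)
        ≤ ENNReal.ofReal (2 * Real.exp 1 * C₁ * (2 : ℝ) ^ (-(n : ℝ) * (2 - β))) := by
  intro n hn
  set N : ℝ := (n : ℝ) with hN
  have hN1 : 1 ≤ N := by rw [hN]; exact_mod_cast hn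
  have h2 : (0:ℝ) < 2 := two_pos
  set p : ℝ := (2:ℝ) ^ (-N) with hp
  have hppos : 0 < p := Real.rpow_pos_of_pos h2 _
  set q : ℝ := (2:ℝ) ^ N with hq
  have hqpos : 0 < q := Real.rpow_pos_of_pos h2 _
  have hpq : p * q = 1 := by
    rw [hp, hq, ← Real.rpow_add h2]; simp
  set lam : ℝ := q ^ 3 with hlamdef
  have hlam : 0 < lam := by positivity
  set c : ℝ := 2 * Real.exp 1 * p ^ 2 with hc
  have hcpos : 0 < c := by positivity
  set S : Set (EuclideanSpace ℝ (Fin l)) := {u | 0 < ‖u‖ ∧ ‖u‖ ≤ 1} with hS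
  set A : Set (EuclideanSpace ℝ (Fin l)) :=
    {u | (2 : ℝ) ^ (-N - 1) < ‖u‖ ∧ ‖u‖ ≤ (2 : ℝ) ^ (-N)} with hA
  have hhalf : (2:ℝ) ^ (-N - 1) = p / 2 := by
    have h' : -N - 1 = -N + (-1) := by ring
    rw [hp, h', Real.rpow_add h2, Real.rpow_neg_one]
    ring
  have hAS : A ⊆ S := by
    intro u hu
    obtain ⟨hu1, hu2⟩ := hu
    constructor
    · exact lt_trans (Real.rpow_pos_of_pos h2 _) hu1
    · exact hu2.trans (Real.rpow_le_one_of_one_le_of_nonpos (by norm_num) (by linarith))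
  -- pointwise bound on A
  have hpt : ∀ u ∈ A, ENNReal.ofReal (‖u‖ ^ 2) ≤
      ENNReal.ofReal c * ENNReal.ofReal (1 - Real.exp (-(lam * ‖u‖ ^ 3))) := by
    intro u hu
    obtain ⟨hu1, hu2⟩ := hu
    set r : ℝ := ‖u‖ with hr
    set t : ℝ := r * q with ht
    have hrpos : 0 < r := lt_trans (Real.rpow_pos_of_pos h2 _) hu1
    have ht1 : 1/2 < t := by
      rw [hhalf] at hu1
      have := mul_lt_mul_of_pos_right hu1 hqpos
      rw [div_mul_eq_mul_div, hpq] at this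
      linarith
    have ht2 : t ≤ 1 := by
      have := mul_le_mul_of_nonneg_right hu2 hqpos.le
      rwa [← hp, hpq] at this
    have hkey := key_ineq t ht1 ht2
    have htgt : lam * r ^ 3 = t ^ 3 := by rw [ht, hlamdef]; ring
    have hrt : r = t * p := by
      field_simp [ht]
      nlinarith [hpq]
    have hfin : r ^ 2 ≤ c * (1 - Real.exp (-(lam * r ^ 3))) := by
      rw [htgt, hrt, hc]; nlinarith [sq_nonneg p]
    calc ENNReal.ofReal (r ^ 2) ≤ ENNReal.ofReal (c * (1 - Real.exp (-(lam * r ^ 3)))) :=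
          ENNReal.ofReal_le_ofReal hfin
      _ = ENNReal.ofReal c * ENNReal.ofReal (1 - Real.exp (-(lam * r ^ 3))) :=
          ENNReal.ofReal_mul hcpos.le
  have hmeas : Measurable fun u : EuclideanSpace ℝ (Fin l) =>
      ENNReal.ofReal c * ENNReal.ofReal (1 - Real.exp (-(lam * ‖u‖ ^ 3))) := by
    fun_prop
  calc (∫⁻ u in A, ENNReal.ofReal (‖u‖ ^ 2) ∂ν)
      ≤ ∫⁻ u in A, ENNReal.ofReal c * ENNReal.ofReal (1 - Real.exp (-(lam * ‖u‖ ^ 3))) ∂ν :=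
        setLIntegral_mono hmeas hpt
    _ ≤ ∫⁻ u in S, ENNReal.ofReal c * ENNReal.ofReal (1 - Real.exp (-(lam * ‖u‖ ^ 3))) ∂ν :=
        lintegral_mono_set hAS
    _ = ENNReal.ofReal c * ∫⁻ u in S, ENNReal.ofReal (1 - Real.exp (-(lam * ‖u‖ ^ 3))) ∂ν :=
        lintegral_const_mul' _ _ ENNReal.ofReal_ne_top
    _ ≤ ENNReal.ofReal c * ENNReal.ofReal (C₁ * lam ^ (β / 3)) :=
        mul_le_mul_right (hbound lam hlam) _
    _ = ENNReal.ofReal (c * (C₁ * lam ^ (β / 3))) := (ENNReal.ofReal_mul hcpos.le).symm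
    _ ≤ ENNReal.ofReal (2 * Real.exp 1 * C₁ * (2 : ℝ) ^ (-N * (2 - β))) := by
        apply ENNReal.ofReal_le_ofReal
        have hq3 : lam = (2:ℝ) ^ (3 * N) := by
          rw [hlamdef, hq, ← Real.rpow_natCast ((2:ℝ)^N) 3, ← Real.rpow_mul h2.le]
          norm_num [mul_comm]
        have hlb : lam ^ (β / 3) = (2:ℝ) ^ (N * β) := by
          rw [hq3, ← Real.rpow_mul h2.le]
          ring_nf
        have hp2 : p ^ 2 = (2:ℝ) ^ (-(2*N)) := by
          rw [hp, ← Real.rpow_natCast ((2:ℝ)^(-N)) 2, ← Real.rpow_mul h2.le]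
          ring_nf
        rw [hlb, hc, hp2]
        have : (2:ℝ) ^ (-(2*N)) * (2:ℝ) ^ (N * β) = (2:ℝ) ^ (-N * (2 - β)) := by
          rw [← Real.rpow_add h2]; ring_nf
        exact le_of_eq (by rw [← this]; ring)
end

section
/- Let ν be a σ-finite Borel measure on 𝒪, β ∈ (0,2), and C₁ > 0, and assume ∫_𝒪 (1 - e^{-λ|u|³}) ν(du) ≤ C₁ λ^{β/3} for every λ > 0. Then there exists a constant C > 0 such that for every ε ∈ (0,1], ∫_{{u ∈ 𝒪 : |u| ≤ ε}} |u|² ν(du) ≤ C ε^{2-β}. -/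
open MeasureTheory Set Filter

/-- If `ν` is a σ-finite measure on `𝒪`, `β ∈ (0,2)` and `C₁ > 0` with
`∫_𝒪 (1 - e^{-λ‖u‖³}) ν(du) ≤ C₁ λ^{β/3}` for every `λ > 0`, then there is `C > 0` with
`∫_{‖u‖ ≤ ε} ‖u‖² ν(du) ≤ C ε^{2-β}` for every `ε ∈ (0,1]`. -/
theorem stmt_3 (l : ℕ) (hl : 1 ≤ l)
    (ν : Measure (EuclideanSpace ℝ (Fin l))) [SigmaFinite ν]
    (hsupp : ν {u : EuclideanSpace ℝ (Fin l) | ¬ (0 < ‖u‖ ∧ ‖u‖ ≤ 1)} = 0)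
    (β : ℝ) (hβ : β ∈ Set.Ioo (0 : ℝ) 2) (C₁ : ℝ) (hC₁ : 0 < C₁)
    (hbound : ∀ lam : ℝ, 0 < lam →
      (∫⁻ u in {u : EuclideanSpace ℝ (Fin l) | 0 < ‖u‖ ∧ ‖u‖ ≤ 1},
        ENNReal.ofReal (1 - Real.exp (-(lam * ‖u‖ ^ 3))) ∂ν)
        ≤ ENNReal.ofReal (C₁ * lam ^ (β / 3))) :
    ∃ C : ℝ, 0 < C ∧ ∀ ε ∈ Set.Ioc (0 : ℝ) 1,
      (∫⁻ u in {u : EuclideanSpace ℝ (Fin l) | (0 < ‖u‖ ∧ ‖u‖ ≤ 1) ∧ ‖u‖ ≤ ε},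
        ENNReal.ofReal (‖u‖ ^ 2) ∂ν) ≤ ENNReal.ofReal (C * ε ^ (2 - β)) := by
  obtain ⟨hβ0, hβ2⟩ := hβ
  set c₀ : ℝ := 1 - Real.exp (-(1/8 : ℝ)) with hc₀def
  have hc₀ : 0 < c₀ := by
    have h := Real.exp_lt_one_iff.mpr (show -(1/8 : ℝ) < 0 by norm_num)
    simp only [hc₀def]; linarith
  set r : ℝ := (1/2 : ℝ) ^ (2 - β) with hrdef
  have hr0 : 0 < r := Real.rpow_pos_of_pos (by norm_num) _
  have hr1 : r < 1 := Real.rpow_lt_one (by norm_num) (by norm_num) (by linarith)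
  set D : ℝ := C₁ / c₀ with hDdef
  have hD : 0 < D := div_pos hC₁ hc₀
  refine ⟨4 * D * (1 - r)⁻¹, mul_pos (mul_pos (by norm_num) hD) (inv_pos.mpr (by linarith)), ?_⟩
  intro ε hε
  obtain ⟨hε0, hε1⟩ := hε
  set S := {u : EuclideanSpace ℝ (Fin l) | 0 < ‖u‖ ∧ ‖u‖ ≤ 1} with hS
  set A : ℕ → Set (EuclideanSpace ℝ (Fin l)) :=
    fun k => {u | (1/2:ℝ)^(k+1) < ‖u‖ ∧ ‖u‖ ≤ (1/2:ℝ)^k} with hA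
  -- measure bound on annuli
  have hmeas : ∀ k : ℕ, ν (S ∩ A k) ≤ ENNReal.ofReal (D * ((2:ℝ)^k)^β) := by
    intro k
    set lam : ℝ := ((2:ℝ)^k)^3 with hlam
    have hlam0 : 0 < lam := by positivity
    have h1 : ENNReal.ofReal c₀ * ν (S ∩ A k)
        ≤ ENNReal.ofReal (C₁ * ((2:ℝ)^k)^β) := by
      have hexp : C₁ * ((2:ℝ)^k)^β = C₁ * lam ^ (β/3) := by
        rw [hlam, ← Real.rpow_natCast ((2:ℝ)^k) 3, ← Real.rpow_mul (by positivity),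
          show ((3:ℕ):ℝ) * (β/3) = β from by push_cast; ring]
      rw [hexp]
      calc ENNReal.ofReal c₀ * ν (S ∩ A k)
          = ∫⁻ _ in S ∩ A k, ENNReal.ofReal c₀ ∂ν := (setLIntegral_const _ _).symm
        _ ≤ ∫⁻ u in S ∩ A k, ENNReal.ofReal (1 - Real.exp (-(lam * ‖u‖^3))) ∂ν := by
            apply setLIntegral_mono (by fun_prop)
            intro u hu
            apply ENNReal.ofReal_le_ofReal
            have h18 : (1/8 : ℝ) ≤ lam * ‖u‖^3 := by
              have hlt := hu.2.1
              have h3 : ((1/2:ℝ)^(k+1))^3 ≤ ‖u‖^3 :=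
                pow_le_pow_left₀ (by positivity) (le_of_lt hlt) 3
              have hprod : (2:ℝ)^k * (1/2:ℝ)^(k+1) = 1/2 := by
                rw [pow_succ, ← mul_assoc, ← mul_pow]; norm_num
              have : lam * ((1/2:ℝ)^(k+1))^3 = 1/8 := by
                rw [hlam, ← mul_pow, hprod]; norm_num
              nlinarith [pow_pos (show (0:ℝ) < (2:ℝ)^k by positivity) 3]
            have := Real.exp_le_exp.mpr (neg_le_neg h18)
            simp only [hc₀def]; linarith
        _ ≤ ∫⁻ u in S, ENNReal.ofReal (1 - Real.exp (-(lam * ‖u‖^3))) ∂ν :=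
            lintegral_mono_set inter_subset_left
        _ ≤ _ := hbound lam hlam0
    have h2 : ν (S ∩ A k) ≤ ENNReal.ofReal (C₁ * ((2:ℝ)^k)^β) / ENNReal.ofReal c₀ := by
      rw [ENNReal.le_div_iff_mul_le (Or.inl (by simp [ENNReal.ofReal_eq_zero]; linarith))
        (Or.inl ENNReal.ofReal_ne_top)]
      rw [mul_comm]; exact h1
    calc ν (S ∩ A k) ≤ ENNReal.ofReal (C₁ * ((2:ℝ)^k)^β) / ENNReal.ofReal c₀ := h2
      _ = ENNReal.ofReal (C₁ * ((2:ℝ)^k)^β / c₀) := (ENNReal.ofReal_div_of_pos hc₀).symm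
      _ = ENNReal.ofReal (D * ((2:ℝ)^k)^β) := by rw [hDdef]; ring_nf
  -- annulus integral bound
  have hann : ∀ k : ℕ, (∫⁻ u in S ∩ A k, ENNReal.ofReal (‖u‖^2) ∂ν)
      ≤ ENNReal.ofReal (D * ((1/2:ℝ)^k)^(2-β)) := by
    intro k
    have hxpos : (0:ℝ) < (2:ℝ)^k := by positivity
    have hpt : (∫⁻ u in S ∩ A k, ENNReal.ofReal (‖u‖^2) ∂ν)
        ≤ ∫⁻ _ in S ∩ A k, ENNReal.ofReal (((1/2:ℝ)^k)^2) ∂ν := by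
      apply setLIntegral_mono (by fun_prop)
      intro u hu
      exact ENNReal.ofReal_le_ofReal (by nlinarith [hu.2.2, norm_nonneg u])
    rw [setLIntegral_const] at hpt
    have hx : ((1/2:ℝ)^k)^(2-β) = ((1/2:ℝ)^k)^2 * ((2:ℝ)^k)^β := by
      have h2 : ((1/2:ℝ)^k) = ((2:ℝ)^k)⁻¹ := by rw [one_div, inv_pow]
      rw [h2, Real.inv_rpow hxpos.le, ← Real.rpow_neg hxpos.le,
        show -(2-β) = β + (-2) from by ring, Real.rpow_add hxpos,
        Real.rpow_neg hxpos.le, inv_pow]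
      rw [show ((2:ℝ)^k)^(2:ℝ) = ((2:ℝ)^k)^(2:ℕ) from Real.rpow_two _]
      ring
    calc (∫⁻ u in S ∩ A k, ENNReal.ofReal (‖u‖^2) ∂ν)
        ≤ ENNReal.ofReal (((1/2:ℝ)^k)^2) * ν (S ∩ A k) := hpt
      _ ≤ ENNReal.ofReal (((1/2:ℝ)^k)^2) * ENNReal.ofReal (D * ((2:ℝ)^k)^β) := by
          gcongr; exact hmeas k
      _ = ENNReal.ofReal (((1/2:ℝ)^k)^2 * (D * ((2:ℝ)^k)^β)) :=
          (ENNReal.ofReal_mul (by positivity)).symm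
      _ = ENNReal.ofReal (D * ((1/2:ℝ)^k)^(2-β)) := by rw [hx]; ring_nf
  -- choose k₀
  have hex : ∃ k : ℕ, (1/2:ℝ)^(k+1) < ε := by
    obtain ⟨n, hn⟩ := exists_pow_lt_of_lt_one hε0 (by norm_num : (1/2:ℝ) < 1)
    exact ⟨n, lt_of_le_of_lt
      (pow_le_pow_of_le_one (by norm_num) (by norm_num) (Nat.le_succ n)) hn⟩
  set k₀ := Nat.find hex with hk₀
  have hk₀spec : (1/2:ℝ)^(k₀+1) < ε := Nat.find_spec hex
  -- inclusion
  have hsub : {u : EuclideanSpace ℝ (Fin l) | (0 < ‖u‖ ∧ ‖u‖ ≤ 1) ∧ ‖u‖ ≤ ε}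
      ⊆ ⋃ j : ℕ, S ∩ A (k₀ + j) := by
    intro u hu
    obtain ⟨⟨hu0, hu1⟩, huε⟩ := hu
    have hexu : ∃ n : ℕ, (1/2:ℝ)^n < ‖u‖ := exists_pow_lt_of_lt_one hu0 (by norm_num)
    have hm1 : 1 ≤ Nat.find hexu := by
      rcases Nat.eq_zero_or_pos (Nat.find hexu) with h0 | h
      · exfalso
        have hs := Nat.find_spec hexu
        rw [h0] at hs; simp at hs; linarith
      · exact h
    obtain ⟨k, hk⟩ : ∃ k, Nat.find hexu = k + 1 :=
      ⟨Nat.find hexu - 1, (Nat.succ_pred_eq_of_pos hm1).symm⟩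
    have hlt : (1/2:ℝ)^(k+1) < ‖u‖ := by rw [← hk]; exact Nat.find_spec hexu
    have hle : ‖u‖ ≤ (1/2:ℝ)^k := by
      by_contra h
      exact Nat.find_min hexu (by omega) (lt_of_not_ge h)
    have hk₀le : k₀ ≤ k := Nat.find_min' hex (hlt.trans_le huε)
    refine mem_iUnion.mpr ⟨k - k₀, ?_⟩
    have hkk : k₀ + (k - k₀) = k := by omega
    rw [hkk]
    exact ⟨⟨hu0, hu1⟩, hlt, hle⟩
  have haux : (1 : ENNReal) - ENNReal.ofReal r = ENNReal.ofReal (1 - r) := by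
    rw [ENNReal.ofReal_sub _ hr0.le, ENNReal.ofReal_one]
  calc (∫⁻ u in {u : EuclideanSpace ℝ (Fin l) | (0 < ‖u‖ ∧ ‖u‖ ≤ 1) ∧ ‖u‖ ≤ ε},
        ENNReal.ofReal (‖u‖ ^ 2) ∂ν)
      ≤ ∫⁻ u in ⋃ j : ℕ, S ∩ A (k₀ + j), ENNReal.ofReal (‖u‖^2) ∂ν :=
        lintegral_mono_set hsub
    _ ≤ ∑' j : ℕ, ∫⁻ u in S ∩ A (k₀ + j), ENNReal.ofReal (‖u‖^2) ∂ν :=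
        lintegral_iUnion_le _ _
    _ ≤ ∑' j : ℕ, ENNReal.ofReal (D * ((1/2:ℝ)^(k₀+j))^(2-β)) :=
        ENNReal.tsum_le_tsum (fun j => hann (k₀ + j))
    _ = ∑' j : ℕ, ENNReal.ofReal (D * ((1/2:ℝ)^k₀)^(2-β)) * ENNReal.ofReal r ^ j := by
        refine tsum_congr fun j => ?_
        rw [← ENNReal.ofReal_pow hr0.le, ← ENNReal.ofReal_mul (by positivity)]
        congr 1
        have hb : ((1/2:ℝ)^j)^(2-β) = r^j := by
          rw [hrdef, ← Real.rpow_natCast ((1/2:ℝ)^(2-β)) j,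
            ← Real.rpow_mul (by norm_num), ← Real.rpow_natCast ((1/2 : ℝ)) j,
            ← Real.rpow_mul (by norm_num), mul_comm]
        rw [pow_add, Real.mul_rpow (by positivity) (by positivity), hb]
        ring
    _ = ENNReal.ofReal (D * ((1/2:ℝ)^k₀)^(2-β)) * (1 - ENNReal.ofReal r)⁻¹ := by
        rw [ENNReal.tsum_mul_left, ENNReal.tsum_geometric]
    _ ≤ ENNReal.ofReal (4 * D * (1 - r)⁻¹ * ε ^ (2 - β)) := by
        rw [haux, ← ENNReal.ofReal_inv_of_pos (by linarith),
          ← ENNReal.ofReal_mul (mul_nonneg hD.le (Real.rpow_nonneg (by positivity) _))]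
        apply ENNReal.ofReal_le_ofReal
        have ha : ((1/2:ℝ)^k₀)^(2-β) ≤ 4 * ε^(2-β) := by
          have h2ε : ((1/2:ℝ)^k₀) ≤ 2*ε := by
            have h := hk₀spec
            rw [pow_succ] at h; linarith
          calc ((1/2:ℝ)^k₀)^(2-β) ≤ (2*ε)^(2-β) :=
              Real.rpow_le_rpow (by positivity) h2ε (by linarith)
            _ = 2^(2-β) * ε^(2-β) := Real.mul_rpow (by norm_num) hε0.le
            _ ≤ 4 * ε^(2-β) := by
                have h24 : (2:ℝ)^(2-β) ≤ 2^(2:ℝ) :=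
                  Real.rpow_le_rpow_of_exponent_le (by norm_num) (by linarith)
                have h4 : (2:ℝ)^(2:ℝ) = 4 := by
                  rw [Real.rpow_two]; norm_num
                nlinarith [Real.rpow_nonneg hε0.le (2-β)]
        have hrinv : (0:ℝ) ≤ (1-r)⁻¹ := inv_nonneg.mpr (by linarith)
        calc D * ((1/2:ℝ)^k₀)^(2-β) * (1-r)⁻¹ ≤ D * (4*ε^(2-β)) * (1-r)⁻¹ := by
              have := mul_le_mul_of_nonneg_left ha hD.le
              nlinarith
          _ = 4 * D * (1-r)⁻¹ * ε^(2-β) := by ring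
end

section
/- Let ν be a σ-finite Borel measure on 𝒪, β ∈ (0,2), and κ, λ₀, C_L > 0. Assume (i) ∫_𝒪 (1 - e^{-λ|u|³}) ν(du) ≥ (κ/2) λ^{β/3} for all λ > λ₀, and (ii) ν({u ∈ 𝒪 : |u| > ε}) ≤ C_L ε^{-β} for all ε ∈ (0,1). Then there exists a constant c > 0 such that ∫_{{u ∈ 𝒪 : |u| ≤ ε}} |u|³ ν(du) ≥ c ε^{3-β} for every ε ∈ (0,1). -/
open MeasureTheory Set Filter

/-- Let `ν` be a σ-finite measure on `𝒪`, `β ∈ (0,2)`, `κ, λ₀, C_L > 0`.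
Assume (i) `∫_𝒪 (1 - e^{-λ‖u‖³}) ν(du) ≥ (κ/2) λ^{β/3}` for all `λ > λ₀` and (ii)
`ν({‖u‖ > ε}) ≤ C_L ε^{-β}` for all `ε ∈ (0,1)`. Then there is `c > 0` with
`∫_{‖u‖ ≤ ε} ‖u‖³ ν(du) ≥ c ε^{3-β}` for every `ε ∈ (0,1)`. -/
theorem stmt_7 (l : ℕ) (hl : 1 ≤ l)
    (ν : Measure (EuclideanSpace ℝ (Fin l))) [SigmaFinite ν]
    (hsupp : ν {u : EuclideanSpace ℝ (Fin l) | ¬ (0 < ‖u‖ ∧ ‖u‖ ≤ 1)} = 0)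
    (β : ℝ) (hβ : β ∈ Set.Ioo (0 : ℝ) 2)
    (κ lam₀ CL : ℝ) (hκ : 0 < κ) (hlam₀ : 0 < lam₀) (hCL : 0 < CL)
    (hlower : ∀ lam : ℝ, lam₀ < lam →
      ENNReal.ofReal (κ / 2 * lam ^ (β / 3)) ≤
        ∫⁻ u in {u : EuclideanSpace ℝ (Fin l) | 0 < ‖u‖ ∧ ‖u‖ ≤ 1},
          ENNReal.ofReal (1 - Real.exp (-(lam * ‖u‖ ^ 3))) ∂ν)
    (htail : ∀ ε ∈ Set.Ioo (0 : ℝ) 1,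
      ν {u : EuclideanSpace ℝ (Fin l) | (0 < ‖u‖ ∧ ‖u‖ ≤ 1) ∧ ε < ‖u‖}
        ≤ ENNReal.ofReal (CL * ε ^ (-β))) :
    ∃ c : ℝ, 0 < c ∧ ∀ ε ∈ Set.Ioo (0 : ℝ) 1,
      ENNReal.ofReal (c * ε ^ (3 - β)) ≤
        ∫⁻ u in {u : EuclideanSpace ℝ (Fin l) | (0 < ‖u‖ ∧ ‖u‖ ≤ 1) ∧ ‖u‖ ≤ ε},
          ENNReal.ofReal (‖u‖ ^ 3) ∂ν := by
  have hβ0 : (0:ℝ) < β := hβ.1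
  set A : ℝ := (4 * CL / κ) ^ (3 / β) with hA
  have hA0 : 0 < A := Real.rpow_pos_of_pos (by positivity) _
  set M : ℝ := max A lam₀ + 1 with hMdef
  have hM0 : (0:ℝ) < M := by positivity
  have hMA : A ≤ M := le_trans (le_max_left _ _) (by linarith [le_max_left A lam₀])
  have hMlam : lam₀ < M := lt_of_le_of_lt (le_max_right A lam₀) (by simp [hMdef])
  -- M ^ (β/3) ≥ 4 CL / κ
  have hM4 : 4 * CL / κ ≤ M ^ (β / 3) := by
    have h1 : A ^ (β / 3) ≤ M ^ (β / 3) :=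
      Real.rpow_le_rpow hA0.le hMA (by positivity)
    have h2 : A ^ (β / 3) = 4 * CL / κ := by
      rw [hA, ← Real.rpow_mul (by positivity)]
      rw [div_mul_div_comm]
      rw [show (3:ℝ) * β / (β * 3) = 1 by rw [mul_comm]; field_simp]
      exact Real.rpow_one _
    linarith
  refine ⟨κ / 4 * M ^ (β / 3 - 1), by positivity, ?_⟩
  rintro ε ⟨hε0, hε1⟩
  set c : ℝ := κ / 4 * M ^ (β / 3 - 1) with hc
  set lam : ℝ := M * ε ^ (-(3:ℝ)) with hlamdef
  have hεp : (1:ℝ) ≤ ε ^ (-(3:ℝ)) :=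
    Real.one_le_rpow_of_pos_of_le_one_of_nonpos hε0 hε1.le (by norm_num)
  have hlam0 : 0 < lam := by
    have := Real.rpow_pos_of_pos hε0 (-(3:ℝ)); positivity
  have hlamgt : lam₀ < lam := by
    calc lam₀ < M := hMlam
    _ = M * 1 := by ring
    _ ≤ lam := by rw [hlamdef]; exact mul_le_mul_of_nonneg_left hεp hM0.le
  -- key rpow identities
  have hE1 : lam ^ (β / 3) = M ^ (β / 3) * ε ^ (-β) := by
    rw [hlamdef, Real.mul_rpow hM0.le (Real.rpow_pos_of_pos hε0 _).le,
      ← Real.rpow_mul hε0.le]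
    ring_nf
  have hE2 : lam * (c * ε ^ (3 - β)) = κ / 4 * lam ^ (β / 3) := by
    rw [hE1, hc, hlamdef]
    have h1 : ε ^ (-(3:ℝ)) * ε ^ (3 - β) = ε ^ (-β) := by
      rw [← Real.rpow_add hε0]; ring_nf
    have h2 : M * M ^ (β / 3 - 1) = M ^ (β / 3) := by
      nth_rewrite 1 [← Real.rpow_one M]
      rw [← Real.rpow_add hM0]; ring_nf
    calc M * ε ^ (-(3:ℝ)) * (κ / 4 * M ^ (β / 3 - 1) * ε ^ (3 - β))
        = κ / 4 * (M * M ^ (β / 3 - 1)) * (ε ^ (-(3:ℝ)) * ε ^ (3 - β)) := by ring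
      _ = κ / 4 * (M ^ (β / 3) * ε ^ (-β)) := by rw [h1, h2]; ring
  -- real inequality: κ/4 λ^{β/3} + CL ε^{-β} ≤ κ/2 λ^{β/3}
  have hεβ : (0:ℝ) < ε ^ (-β) := Real.rpow_pos_of_pos hε0 _
  have hF : κ / 4 * lam ^ (β / 3) + CL * ε ^ (-β) ≤ κ / 2 * lam ^ (β / 3) := by
    rw [hE1]
    have : CL ≤ κ / 4 * M ^ (β / 3) := by
      rw [div_le_iff₀ hκ] at hM4; nlinarith
    nlinarith
  -- sets
  set S : Set (EuclideanSpace ℝ (Fin l)) := {u | 0 < ‖u‖ ∧ ‖u‖ ≤ 1} with hS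
  set Ssm : Set (EuclideanSpace ℝ (Fin l)) := {u | (0 < ‖u‖ ∧ ‖u‖ ≤ 1) ∧ ‖u‖ ≤ ε} with hSsm
  set Sbig : Set (EuclideanSpace ℝ (Fin l)) := {u | (0 < ‖u‖ ∧ ‖u‖ ≤ 1) ∧ ε < ‖u‖} with hSbig
  have hnormmeas : Measurable fun u : EuclideanSpace ℝ (Fin l) => ‖u‖ :=
    continuous_norm.measurable
  have hmbig : MeasurableSet Sbig := by
    apply MeasurableSet.inter
    · exact (hnormmeas measurableSet_Ioc : _)
    · exact hnormmeas measurableSet_Ioi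
  have hsplit : S = Ssm ∪ Sbig := by
    ext u; simp only [hS, hSsm, hSbig, mem_setOf_eq, mem_union]
    constructor
    · intro h; rcases le_or_gt ‖u‖ ε with h' | h'
      · exact Or.inl ⟨h, h'⟩
      · exact Or.inr ⟨h, h'⟩
    · rintro (⟨h, _⟩ | ⟨h, _⟩) <;> exact h
  have hdisj : Disjoint Ssm Sbig := by
    rw [Set.disjoint_left]
    rintro u ⟨_, h1⟩ ⟨_, h2⟩
    exact absurd h1 (not_le.mpr h2)
  set f : EuclideanSpace ℝ (Fin l) → ENNReal :=
    fun u => ENNReal.ofReal (1 - Real.exp (-(lam * ‖u‖ ^ 3))) with hf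
  have hIbig : ∫⁻ u in Sbig, f u ∂ν ≤ ENNReal.ofReal (CL * ε ^ (-β)) := by
    calc ∫⁻ u in Sbig, f u ∂ν ≤ ∫⁻ _ in Sbig, 1 ∂ν := by
          apply lintegral_mono
          intro u
          exact ENNReal.ofReal_le_one.mpr (by
            have := Real.exp_pos (-(lam * ‖u‖ ^ 3)); linarith)
      _ = ν Sbig := setLIntegral_one _
      _ ≤ ENNReal.ofReal (CL * ε ^ (-β)) := htail ε ⟨hε0, hε1⟩
  set J : ENNReal := ∫⁻ u in Ssm, ENNReal.ofReal (‖u‖ ^ 3) ∂ν with hJ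
  have hIsm : ∫⁻ u in Ssm, f u ∂ν ≤ ENNReal.ofReal lam * J := by
    calc ∫⁻ u in Ssm, f u ∂ν
        ≤ ∫⁻ u in Ssm, ENNReal.ofReal lam * ENNReal.ofReal (‖u‖ ^ 3) ∂ν := by
          apply lintegral_mono
          intro u
          dsimp only
          rw [← ENNReal.ofReal_mul hlam0.le]
          apply ENNReal.ofReal_le_ofReal
          have hx : (0:ℝ) ≤ lam * ‖u‖ ^ 3 := by positivity
          have := Real.add_one_le_exp (-(lam * ‖u‖ ^ 3))
          linarith
      _ = ENNReal.ofReal lam * J := lintegral_const_mul' _ _ ENNReal.ofReal_ne_top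
  have hmain : ENNReal.ofReal (κ / 2 * lam ^ (β / 3)) ≤
      ENNReal.ofReal lam * J + ENNReal.ofReal (CL * ε ^ (-β)) := by
    calc ENNReal.ofReal (κ / 2 * lam ^ (β / 3)) ≤ ∫⁻ u in S, f u ∂ν := hlower lam hlamgt
      _ = ∫⁻ u in Ssm, f u ∂ν + ∫⁻ u in Sbig, f u ∂ν := by
          rw [hsplit, lintegral_union hmbig hdisj]
      _ ≤ ENNReal.ofReal lam * J + ENNReal.ofReal (CL * ε ^ (-β)) :=
          add_le_add hIsm hIbig
  -- now deduce
  have hstep : ENNReal.ofReal (lam * (c * ε ^ (3 - β))) + ENNReal.ofReal (CL * ε ^ (-β)) ≤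
      ENNReal.ofReal lam * J + ENNReal.ofReal (CL * ε ^ (-β)) := by
    refine le_trans ?_ hmain
    rw [← ENNReal.ofReal_add (by rw [hE2]; positivity) (by positivity)]
    apply ENNReal.ofReal_le_ofReal
    rw [hE2]; linarith
  have hcancel : ENNReal.ofReal (lam * (c * ε ^ (3 - β))) ≤ ENNReal.ofReal lam * J := by
    exact (ENNReal.add_le_add_iff_right ENNReal.ofReal_ne_top).mp hstep
  rw [ENNReal.ofReal_mul hlam0.le] at hcancel
  have := (ENNReal.mul_le_mul_iff_right (a := ENNReal.ofReal lam)
    (ne_of_gt (ENNReal.ofReal_pos.mpr hlam0)) ENNReal.ofReal_ne_top).mp hcancel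
  exact le_trans this (le_of_eq hJ.symm)
end

section
/- Let ν be a σ-finite Borel measure on 𝒪 with ∫_𝒪 |u|³ ν(du) < ∞, β ∈ (0,2), and κ, λ₀, C_L > 0. Assume (i) ∫_𝒪 (1 - e^{-λ|u|³}) ν(du) ≥ (κ/2) λ^{β/3} for all λ > λ₀, and (ii) ν({u ∈ 𝒪 : |u| > ε}) ≤ C_L ε^{-β} for all ε ∈ (0,1). Then for every p ≥ 1 there exists a constant C > 0 such that for all s > 0 and all ε ∈ (0,1), ∫_0^∞ λ^{p-1} exp{ -s ∫_{{u ∈ 𝒪 : |u| ≤ ε}} (1 - e^{-λ|u|³}) ν(du) } dλ ≤ C ( (s ε^{3-β})^{-p} + s^{-3p/β} ). -/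
open MeasureTheory Set Filter

/-- Exponential of the negative of an extended-nonnegative real, with `expNeg ∞ = 0`. -/
noncomputable def expNeg (x : ENNReal) : ENNReal :=
  if x = ⊤ then 0 else ENNReal.ofReal (Real.exp (-x.toReal))

lemma aux_convex {θ t : ℝ} (hθ0 : 0 ≤ θ) (hθ1 : θ ≤ 1) (_ht : 0 ≤ t) :
    θ * (1 - Real.exp (-t)) ≤ 1 - Real.exp (-(θ * t)) := by
  have h := convexOn_exp.2 (mem_univ (-t)) (mem_univ (0:ℝ)) hθ0
    (show (0:ℝ) ≤ 1 - θ by linarith) (by ring)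
  simp only [smul_eq_mul, mul_zero, add_zero, Real.exp_zero, mul_one] at h
  have he : θ * -t = -(θ * t) := by ring
  rw [he] at h
  nlinarith [Real.exp_pos (-t)]

lemma expNeg_le {c : ℝ} {x : ENNReal} (h : ENNReal.ofReal c ≤ x) :
    expNeg x ≤ ENNReal.ofReal (Real.exp (-c)) := by
  unfold expNeg
  split_ifs with hx
  · exact zero_le
  · refine ENNReal.ofReal_le_ofReal (Real.exp_le_exp.2 (neg_le_neg ?_))
    rcases le_or_gt c 0 with hc | hc
    · exact hc.trans ENNReal.toReal_nonneg
    · exact (ENNReal.ofReal_le_iff_le_toReal hx).1 h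

lemma aux_integrable {r q b : ℝ} (hr : 0 < r) (hq : -1 < q) (hb : 0 < b) :
    IntegrableOn (fun x : ℝ => x ^ q * Real.exp (-(b * x ^ r))) (Ioi 0) := by
  have hq' : -1 < (q + 1) / r - 1 := by
    have : 0 < (q + 1) / r := div_pos (by linarith) hr
    linarith
  have hf : IntegrableOn (fun y : ℝ => y ^ ((q + 1) / r - 1) * Real.exp (-b * y)) (Ioi 0) := by
    have := integrableOn_rpow_mul_exp_neg_mul_rpow hq' one_pos hb
    simpa [Real.rpow_one] using this
  have := (integrableOn_Ioi_comp_rpow_iff' (fun y : ℝ => y ^ ((q + 1) / r - 1) *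
      Real.exp (-b * y)) hr.ne').2 hf
  refine this.congr_fun (fun x hx => ?_) measurableSet_Ioi
  have hx0 : (0:ℝ) < x := hx
  have hexp : r - 1 + r * ((q + 1) / r - 1) = q := by field_simp; ring
  simp only [smul_eq_mul, ← Real.rpow_mul hx0.le, neg_mul, ← mul_assoc,
    ← Real.rpow_add hx0, hexp]

lemma aux_lintegral {r q b : ℝ} (hr : 0 < r) (hq : -1 < q) (hb : 0 < b) :
    ∫⁻ x in Ioi (0:ℝ), ENNReal.ofReal (x ^ q * Real.exp (-(b * x ^ r))) =
      ENNReal.ofReal (b ^ (-(q + 1) / r) * (1 / r) * Real.Gamma ((q + 1) / r)) := by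
  rw [← ofReal_integral_eq_lintegral_ofReal (aux_integrable hr hq hb)
    ((ae_restrict_iff' measurableSet_Ioi).2 (ae_of_all _ fun x hx => by
      have hx0 : (0:ℝ) < x := hx
      positivity))]
  congr 1
  rw [← integral_rpow_mul_exp_neg_mul_rpow hr hq hb]
  exact setIntegral_congr_fun measurableSet_Ioi (fun x _ => by rw [neg_mul])

set_option maxHeartbeats 1000000 in
/-- Let `ν` be a σ-finite measure on `𝒪` with finite third moment,
`β ∈ (0,2)`, `κ, λ₀, C_L > 0`. Assume (i) `∫_𝒪 (1 - e^{-λ‖u‖³}) ν(du) ≥ (κ/2) λ^{β/3}` for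
all `λ > λ₀` and (ii) `ν({‖u‖ > ε}) ≤ C_L ε^{-β}` for all `ε ∈ (0,1)`. Then for every
`p ≥ 1` there is `C > 0` such that for all `s > 0`, `ε ∈ (0,1)`,
`∫_0^∞ λ^{p-1} exp(-s ∫_{‖u‖≤ε} (1 - e^{-λ‖u‖³}) ν(du)) dλ ≤ C ((s ε^{3-β})^{-p} + s^{-3p/β})`. -/
theorem stmt_8 (l : ℕ) (hl : 1 ≤ l)
    (ν : Measure (EuclideanSpace ℝ (Fin l))) [SigmaFinite ν]
    (hsupp : ν {u : EuclideanSpace ℝ (Fin l) | ¬ (0 < ‖u‖ ∧ ‖u‖ ≤ 1)} = 0)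
    (hmom : (∫⁻ u in {u : EuclideanSpace ℝ (Fin l) | 0 < ‖u‖ ∧ ‖u‖ ≤ 1},
        ENNReal.ofReal (‖u‖ ^ 3) ∂ν) < ⊤)
    (β : ℝ) (hβ : β ∈ Set.Ioo (0 : ℝ) 2)
    (κ lam₀ CL : ℝ) (hκ : 0 < κ) (hlam₀ : 0 < lam₀) (hCL : 0 < CL)
    (hlower : ∀ lam : ℝ, lam₀ < lam →
      ENNReal.ofReal (κ / 2 * lam ^ (β / 3)) ≤
        ∫⁻ u in {u : EuclideanSpace ℝ (Fin l) | 0 < ‖u‖ ∧ ‖u‖ ≤ 1},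
          ENNReal.ofReal (1 - Real.exp (-(lam * ‖u‖ ^ 3))) ∂ν)
    (htail : ∀ ε ∈ Set.Ioo (0 : ℝ) 1,
      ν {u : EuclideanSpace ℝ (Fin l) | (0 < ‖u‖ ∧ ‖u‖ ≤ 1) ∧ ε < ‖u‖}
        ≤ ENNReal.ofReal (CL * ε ^ (-β))) :
    ∀ p : ℝ, 1 ≤ p → ∃ C : ℝ, 0 < C ∧ ∀ s : ℝ, 0 < s → ∀ ε ∈ Set.Ioo (0 : ℝ) 1,
      (∫⁻ lam in Set.Ioi (0 : ℝ),
          ENNReal.ofReal (lam ^ (p - 1)) *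
            expNeg (ENNReal.ofReal s *
              ∫⁻ u in {u : EuclideanSpace ℝ (Fin l) | (0 < ‖u‖ ∧ ‖u‖ ≤ 1) ∧ ‖u‖ ≤ ε},
                ENNReal.ofReal (1 - Real.exp (-(lam * ‖u‖ ^ 3))) ∂ν))
        ≤ ENNReal.ofReal (C * ((s * ε ^ (3 - β)) ^ (-p) + s ^ (-(3 * p / β)))) := by
  obtain ⟨hβ0, hβ2⟩ := hβ
  intro p hp
  have hp0 : (0:ℝ) < p := lt_of_lt_of_le one_pos hp
  have hβ3 : (0:ℝ) < β / 3 := by linarith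
  -- the threshold constant M
  set M : ℝ := max (lam₀ + 1) ((4 * CL / κ) ^ ((3:ℝ) / β) + 1) with hMdef
  have hM0 : (0:ℝ) < M := lt_of_lt_of_le (by linarith) (le_max_left _ _)
  have hMlam : lam₀ < M := lt_of_lt_of_le (by linarith) (le_max_left _ _)
  have hMC : CL ≤ κ / 4 * M ^ (β / 3) := by
    have h1 : (4 * CL / κ) ^ ((3:ℝ) / β) + 1 ≤ M := le_max_right _ _
    have h2 : ((4 * CL / κ) ^ ((3:ℝ) / β)) ^ (β / 3) = 4 * CL / κ := by
      rw [← Real.rpow_mul (by positivity),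
        show (3:ℝ) / β * (β / 3) = 1 by field_simp, Real.rpow_one]
    have h4 : 4 * CL / κ ≤ M ^ (β / 3) := by
      rw [← h2]
      exact Real.rpow_le_rpow (by positivity) (by linarith) (by positivity)
    calc CL = κ / 4 * (4 * CL / κ) := by field_simp
    _ ≤ κ / 4 * M ^ (β / 3) := mul_le_mul_of_nonneg_left h4 (by positivity)
  set c₁ : ℝ := κ / 4 * M ^ (β / 3 - 1) with hc₁def
  have hc₁ : 0 < c₁ := by
    have := Real.rpow_pos_of_pos hM0 (β / 3 - 1)
    rw [hc₁def]; positivity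
  set A : ℝ := Real.Gamma p * c₁ ^ (-p) with hAdef
  set B : ℝ := (3 / β) * Real.Gamma (3 * p / β) * (κ / 4) ^ (-(3 * p / β)) with hBdef
  have hA : 0 < A := by
    have h1 := Real.Gamma_pos_of_pos hp0
    have h2 := Real.rpow_pos_of_pos hc₁ (-p)
    rw [hAdef]; positivity
  have hB : 0 < B := by
    have h1 := Real.Gamma_pos_of_pos (show (0:ℝ) < 3 * p / β by positivity)
    have h2 := Real.rpow_pos_of_pos (show (0:ℝ) < κ / 4 by positivity) (-(3 * p / β))
    rw [hBdef]; positivity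
  refine ⟨A + B, by positivity, ?_⟩
  intro s hs ε hε
  obtain ⟨hε0, hε1⟩ := hε
  have htail' := htail ε ⟨hε0, hε1⟩
  -- name the sets
  set Sfull : Set (EuclideanSpace ℝ (Fin l)) :=
    {u : EuclideanSpace ℝ (Fin l) | 0 < ‖u‖ ∧ ‖u‖ ≤ 1} with hSfull
  set Sε : Set (EuclideanSpace ℝ (Fin l)) :=
    {u : EuclideanSpace ℝ (Fin l) | (0 < ‖u‖ ∧ ‖u‖ ≤ 1) ∧ ‖u‖ ≤ ε} with hSε
  set Tε : Set (EuclideanSpace ℝ (Fin l)) :=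
    {u : EuclideanSpace ℝ (Fin l) | (0 < ‖u‖ ∧ ‖u‖ ≤ 1) ∧ ε < ‖u‖} with hTε
  have hTmeas : MeasurableSet Tε := by
    rw [hTε]
    exact measurable_norm (show MeasurableSet (Ioc (0:ℝ) 1 ∩ Ioi ε) from
      measurableSet_Ioc.inter measurableSet_Ioi)
  have hdisj : Disjoint Sε Tε := by
    rw [Set.disjoint_left]
    rintro u hu hu'
    rw [hSε] at hu; rw [hTε] at hu'
    exact absurd hu.2 (not_le.2 hu'.2)
  have hunion : Sfull = Sε ∪ Tε := by
    rw [hSfull, hSε, hTε]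
    ext u
    simp only [mem_setOf_eq, mem_union]
    constructor
    · intro h
      rcases le_or_gt ‖u‖ ε with h' | h'
      · exact Or.inl ⟨h, h'⟩
      · exact Or.inr ⟨h, h'⟩
    · rintro (⟨h, _⟩ | ⟨h, _⟩) <;> exact h
  -- basic facts about ε and lamS
  have hεinv : 1 ≤ ε ^ (-(3:ℝ)) :=
    Real.one_le_rpow_of_pos_of_le_one_of_nonpos hε0 hε1.le (by norm_num)
  have hεinv0 : 0 < ε ^ (-(3:ℝ)) := Real.rpow_pos_of_pos hε0 _
  set lamS : ℝ := M * ε ^ (-(3:ℝ)) with hlamSdef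
  have hlamS0 : 0 < lamS := by rw [hlamSdef]; positivity
  have hlamSl : lam₀ < lamS := by
    calc lam₀ < M := hMlam
    _ ≤ lamS := by rw [hlamSdef]; exact le_mul_of_one_le_right hM0.le hεinv
  have hlamSpow : lamS ^ (β / 3) = M ^ (β / 3) * ε ^ (-β) := by
    rw [hlamSdef, Real.mul_rpow hM0.le hεinv0.le, ← Real.rpow_mul hε0.le,
      show -(3:ℝ) * (β / 3) = -β by ring]
  have hlamSpow' : lamS ^ (β / 3 - 1) = M ^ (β / 3 - 1) * ε ^ (3 - β) := by
    rw [hlamSdef, Real.mul_rpow hM0.le hεinv0.le, ← Real.rpow_mul hε0.le,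
      show -(3:ℝ) * (β / 3 - 1) = 3 - β by ring]
  -- key lower bound A : for lam ≥ lamS
  have keyA : ∀ lam : ℝ, lamS ≤ lam →
      ENNReal.ofReal (κ / 4 * lam ^ (β / 3)) ≤
        ∫⁻ u in Sε, ENNReal.ofReal (1 - Real.exp (-(lam * ‖u‖ ^ 3))) ∂ν := by
    intro lam hlam
    have hl0 : lam₀ < lam := lt_of_lt_of_le hlamSl hlam
    have hlm0 : (0:ℝ) < lam := hlamS0.trans_le hlam
    have hlampow : (0:ℝ) ≤ lam ^ (β / 3) := Real.rpow_nonneg hlm0.le _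
    have hsplit : (∫⁻ u in Sfull, ENNReal.ofReal (1 - Real.exp (-(lam * ‖u‖ ^ 3))) ∂ν) =
        (∫⁻ u in Sε, ENNReal.ofReal (1 - Real.exp (-(lam * ‖u‖ ^ 3))) ∂ν) +
        (∫⁻ u in Tε, ENNReal.ofReal (1 - Real.exp (-(lam * ‖u‖ ^ 3))) ∂ν) := by
      rw [hunion]
      exact lintegral_union hTmeas hdisj
    have htailb : (∫⁻ u in Tε, ENNReal.ofReal (1 - Real.exp (-(lam * ‖u‖ ^ 3))) ∂ν) ≤
        ENNReal.ofReal (CL * ε ^ (-β)) := by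
      calc (∫⁻ u in Tε, ENNReal.ofReal (1 - Real.exp (-(lam * ‖u‖ ^ 3))) ∂ν)
          ≤ ∫⁻ _ in Tε, 1 ∂ν := lintegral_mono fun u =>
            ENNReal.ofReal_le_one.2 (by linarith [Real.exp_pos (-(lam * ‖u‖ ^ 3))])
      _ = ν Tε := setLIntegral_one _
      _ ≤ _ := htail'
    have hCLb : ENNReal.ofReal (CL * ε ^ (-β)) ≤ ENNReal.ofReal (κ / 4 * lam ^ (β / 3)) := by
      apply ENNReal.ofReal_le_ofReal
      have h5 : M ^ (β / 3) * ε ^ (-β) ≤ lam ^ (β / 3) := by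
        rw [← hlamSpow]
        exact Real.rpow_le_rpow hlamS0.le hlam hβ3.le
      have hεβ : (0:ℝ) ≤ ε ^ (-β) := by positivity
      calc CL * ε ^ (-β) ≤ κ / 4 * M ^ (β / 3) * ε ^ (-β) :=
        mul_le_mul_of_nonneg_right hMC hεβ
      _ = κ / 4 * (M ^ (β / 3) * ε ^ (-β)) := by ring
      _ ≤ κ / 4 * lam ^ (β / 3) := mul_le_mul_of_nonneg_left h5 (by positivity)
    have hmain : ENNReal.ofReal (κ / 2 * lam ^ (β / 3)) ≤
        (∫⁻ u in Sε, ENNReal.ofReal (1 - Real.exp (-(lam * ‖u‖ ^ 3))) ∂ν) +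
          ENNReal.ofReal (κ / 4 * lam ^ (β / 3)) := by
      calc ENNReal.ofReal (κ / 2 * lam ^ (β / 3))
          ≤ ∫⁻ u in Sfull, ENNReal.ofReal (1 - Real.exp (-(lam * ‖u‖ ^ 3))) ∂ν := hlower lam hl0
      _ = _ + _ := hsplit
      _ ≤ _ := add_le_add_right (htailb.trans hCLb) _
    have hsub : ENNReal.ofReal (κ / 4 * lam ^ (β / 3)) =
        ENNReal.ofReal (κ / 2 * lam ^ (β / 3)) - ENNReal.ofReal (κ / 4 * lam ^ (β / 3)) := by
      rw [← ENNReal.ofReal_sub _ (by nlinarith)]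
      congr 1
      ring
    rw [hsub]
    exact tsub_le_iff_right.2 hmain
  -- key lower bound B : for 0 < lam ≤ lamS
  have keyB : ∀ lam : ℝ, 0 < lam → lam ≤ lamS →
      ENNReal.ofReal (c₁ * ε ^ (3 - β) * lam) ≤
        ∫⁻ u in Sε, ENNReal.ofReal (1 - Real.exp (-(lam * ‖u‖ ^ 3))) ∂ν := by
    intro lam hlam0 hlam
    have hθ0 : (0:ℝ) ≤ lam / lamS := by positivity
    have hθ1 : lam / lamS ≤ 1 := (div_le_one hlamS0).2 hlam
    have halg : c₁ * ε ^ (3 - β) * lam = lam / lamS * (κ / 4 * lamS ^ (β / 3)) := by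
      rw [show β / 3 = β / 3 - 1 + 1 by ring, Real.rpow_add hlamS0, Real.rpow_one, hlamSpow',
        hc₁def]
      field_simp
    calc ENNReal.ofReal (c₁ * ε ^ (3 - β) * lam)
        = ENNReal.ofReal (lam / lamS) * ENNReal.ofReal (κ / 4 * lamS ^ (β / 3)) := by
          rw [← ENNReal.ofReal_mul hθ0, halg]
    _ ≤ ENNReal.ofReal (lam / lamS) *
          ∫⁻ u in Sε, ENNReal.ofReal (1 - Real.exp (-(lamS * ‖u‖ ^ 3))) ∂ν :=
        mul_le_mul_right (keyA lamS le_rfl) _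
    _ = ∫⁻ u in Sε, ENNReal.ofReal (lam / lamS) *
          ENNReal.ofReal (1 - Real.exp (-(lamS * ‖u‖ ^ 3))) ∂ν :=
        (lintegral_const_mul' _ _ ENNReal.ofReal_ne_top).symm
    _ ≤ ∫⁻ u in Sε, ENNReal.ofReal (1 - Real.exp (-(lam * ‖u‖ ^ 3))) ∂ν := by
        refine lintegral_mono fun u => ?_
        rw [← ENNReal.ofReal_mul hθ0]
        apply ENNReal.ofReal_le_ofReal
        have h := aux_convex hθ0 hθ1 (show (0:ℝ) ≤ lamS * ‖u‖ ^ 3 by positivity)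
        rwa [show lam / lamS * (lamS * ‖u‖ ^ 3) = lam * ‖u‖ ^ 3 by field_simp] at h
  -- the two dominating functions
  set a : ℝ := c₁ * (s * ε ^ (3 - β)) with hadef
  set b2 : ℝ := κ / 4 * s with hb2def
  have hεq : (0:ℝ) < ε ^ (3 - β) := Real.rpow_pos_of_pos hε0 _
  have ha0 : 0 < a := by rw [hadef]; positivity
  have hb20 : 0 < b2 := by rw [hb2def]; positivity
  have hq : (-1:ℝ) < p - 1 := by linarith
  -- pointwise bound
  have hpt : ∀ lam ∈ Ioi (0:ℝ),
      ENNReal.ofReal (lam ^ (p - 1)) *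
          expNeg (ENNReal.ofReal s *
            ∫⁻ u in Sε, ENNReal.ofReal (1 - Real.exp (-(lam * ‖u‖ ^ 3))) ∂ν) ≤
        ENNReal.ofReal (lam ^ (p - 1) * Real.exp (-(a * lam ^ (1:ℝ)))) +
          ENNReal.ofReal (lam ^ (p - 1) * Real.exp (-(b2 * lam ^ (β / 3)))) := by
    intro lam hlam
    have hlam0 : (0:ℝ) < lam := hlam
    have hlp : (0:ℝ) ≤ lam ^ (p - 1) := Real.rpow_nonneg hlam0.le _
    rcases le_or_gt lam lamS with hcase | hcase
    · have h1 : ENNReal.ofReal (a * lam ^ (1:ℝ)) ≤ ENNReal.ofReal s *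
          ∫⁻ u in Sε, ENNReal.ofReal (1 - Real.exp (-(lam * ‖u‖ ^ 3))) ∂ν := by
        calc ENNReal.ofReal (a * lam ^ (1:ℝ))
            = ENNReal.ofReal s * ENNReal.ofReal (c₁ * ε ^ (3 - β) * lam) := by
              rw [← ENNReal.ofReal_mul hs.le, Real.rpow_one, hadef]
              ring_nf
        _ ≤ _ := mul_le_mul_right (keyB lam hlam0 hcase) _
      have h3 := expNeg_le h1
      calc ENNReal.ofReal (lam ^ (p - 1)) * expNeg _
          ≤ ENNReal.ofReal (lam ^ (p - 1)) * ENNReal.ofReal (Real.exp (-(a * lam ^ (1:ℝ)))) :=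
            mul_le_mul_right h3 _
      _ = ENNReal.ofReal (lam ^ (p - 1) * Real.exp (-(a * lam ^ (1:ℝ)))) :=
            (ENNReal.ofReal_mul hlp).symm
      _ ≤ _ := le_self_add
    · have h1 : ENNReal.ofReal (b2 * lam ^ (β / 3)) ≤ ENNReal.ofReal s *
          ∫⁻ u in Sε, ENNReal.ofReal (1 - Real.exp (-(lam * ‖u‖ ^ 3))) ∂ν := by
        calc ENNReal.ofReal (b2 * lam ^ (β / 3))
            = ENNReal.ofReal s * ENNReal.ofReal (κ / 4 * lam ^ (β / 3)) := by
              rw [← ENNReal.ofReal_mul hs.le, hb2def]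
              ring_nf
        _ ≤ _ := mul_le_mul_right (keyA lam hcase.le) _
      have h3 := expNeg_le h1
      calc ENNReal.ofReal (lam ^ (p - 1)) * expNeg _
          ≤ ENNReal.ofReal (lam ^ (p - 1)) * ENNReal.ofReal (Real.exp (-(b2 * lam ^ (β / 3)))) :=
            mul_le_mul_right h3 _
      _ = ENNReal.ofReal (lam ^ (p - 1) * Real.exp (-(b2 * lam ^ (β / 3)))) :=
            (ENNReal.ofReal_mul hlp).symm
      _ ≤ _ := le_add_self
  -- measurability of the first dominating function
  have hf1m : Measurable fun lam : ℝ =>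
      ENNReal.ofReal (lam ^ (p - 1) * Real.exp (-(a * lam ^ (1:ℝ)))) := by
    fun_prop
  -- final computation
  have hX : (0:ℝ) ≤ (s * ε ^ (3 - β)) ^ (-p) := Real.rpow_nonneg (by positivity) _
  have hY : (0:ℝ) ≤ s ^ (-(3 * p / β)) := Real.rpow_nonneg hs.le _
  calc (∫⁻ lam in Set.Ioi (0:ℝ),
        ENNReal.ofReal (lam ^ (p - 1)) *
          expNeg (ENNReal.ofReal s *
            ∫⁻ u in Sε, ENNReal.ofReal (1 - Real.exp (-(lam * ‖u‖ ^ 3))) ∂ν))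
      ≤ ∫⁻ lam in Set.Ioi (0:ℝ),
          (ENNReal.ofReal (lam ^ (p - 1) * Real.exp (-(a * lam ^ (1:ℝ)))) +
            ENNReal.ofReal (lam ^ (p - 1) * Real.exp (-(b2 * lam ^ (β / 3))))) :=
        setLIntegral_mono' measurableSet_Ioi hpt
  _ = (∫⁻ lam in Set.Ioi (0:ℝ),
          ENNReal.ofReal (lam ^ (p - 1) * Real.exp (-(a * lam ^ (1:ℝ))))) +
        ∫⁻ lam in Set.Ioi (0:ℝ),
          ENNReal.ofReal (lam ^ (p - 1) * Real.exp (-(b2 * lam ^ (β / 3)))) :=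
        lintegral_add_left hf1m _
  _ = ENNReal.ofReal (a ^ (-p) * Real.Gamma p) +
        ENNReal.ofReal (b2 ^ (-(3 * p / β)) * (3 / β) * Real.Gamma (3 * p / β)) := by
        have e1 : -(p - 1 + 1) / 1 = -p := by ring
        have e2 : (p - 1 + 1) / 1 = p := by ring
        have e3 : -(p - 1 + 1) / (β / 3) = -(3 * p / β) := by
          rw [div_div_eq_mul_div]
          ring
        have e4 : (p - 1 + 1) / (β / 3) = 3 * p / β := by
          rw [div_div_eq_mul_div]
          ring
        rw [aux_lintegral one_pos hq ha0, aux_lintegral hβ3 hq hb20, e1, e2, e3, e4,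
          one_div_one, one_div_div, mul_one]
  _ ≤ ENNReal.ofReal ((A + B) * ((s * ε ^ (3 - β)) ^ (-p) + s ^ (-(3 * p / β)))) := by
        have hΓ1 : (0:ℝ) < Real.Gamma p := Real.Gamma_pos_of_pos hp0
        have hΓ2 : (0:ℝ) < Real.Gamma (3 * p / β) :=
          Real.Gamma_pos_of_pos (by positivity)
        have hv1 : (0:ℝ) ≤ a ^ (-p) * Real.Gamma p :=
          mul_nonneg (Real.rpow_nonneg ha0.le _) hΓ1.le
        have hv2 : (0:ℝ) ≤ b2 ^ (-(3 * p / β)) * (3 / β) * Real.Gamma (3 * p / β) :=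
          mul_nonneg (mul_nonneg (Real.rpow_nonneg hb20.le _) (by positivity)) hΓ2.le
        rw [← ENNReal.ofReal_add hv1 hv2]
        apply ENNReal.ofReal_le_ofReal
        have ha' : a ^ (-p) = c₁ ^ (-p) * (s * ε ^ (3 - β)) ^ (-p) := by
          rw [hadef, Real.mul_rpow hc₁.le (by positivity)]
        have hb' : b2 ^ (-(3 * p / β)) = (κ / 4) ^ (-(3 * p / β)) * s ^ (-(3 * p / β)) := by
          rw [hb2def, Real.mul_rpow (by positivity) hs.le]
        rw [ha', hb']
        have hc₁p : (0:ℝ) ≤ c₁ ^ (-p) := (Real.rpow_pos_of_pos hc₁ _).le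
        have hκp : (0:ℝ) ≤ (κ / 4) ^ (-(3 * p / β)) :=
          (Real.rpow_pos_of_pos (by positivity) _).le
        rw [hAdef, hBdef]
        nlinarith [mul_nonneg (mul_nonneg hc₁p hX) hΓ1.le,
          mul_nonneg (mul_nonneg hκp hY) hΓ2.le, mul_nonneg hA.le hY, mul_nonneg hB.le hX]
end
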